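/- Let X ~ MaxGumbel(μx, β) and Y ~ MinGumbel(μy, β) be independent. Then E[max(Y - X, 0)] = E[Y·F_max(Y; μx)] - E[X·F_max(-X; -μy)], where F_max(z; μ) = exp(-e^{-(z-μ)/β}) is the MaxGumbel CDF. -/

import Mathlib

open MeasureTheory Set Filter

/-- Density of MaxGumbel(μ, β). -/
noncomputable def maxGumbelPDF (μ β x : ℝ) : ℝ :=
  (1 / β) * Real.exp (-(x - μ) / β - Real.exp (-(x - μ) / β))

/-- Density of MinGumbel(μ, β). -/
noncomputable def minGumbelPDF (μ β y : ℝ) : ℝ :=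
  (1 / β) * Real.exp ((y - μ) / β - Real.exp ((y - μ) / β))

/-- CDF of MaxGumbel(μ, β). -/
noncomputable def maxGumbelCDF (μ β z : ℝ) : ℝ :=
  Real.exp (-Real.exp (-(z - μ) / β))

lemma exp_sub_exp_le (t : ℝ) : Real.exp (t - Real.exp t) ≤ Real.exp (-|t|) := by
  apply Real.exp_le_exp.2
  rcases le_or_gt t 0 with h | h
  · rw [abs_of_nonpos h, neg_neg]
    nlinarith [Real.exp_pos t]
  · rw [abs_of_pos h]
    have h2 : Real.exp t = Real.exp (t / 2) * Real.exp (t / 2) := by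
      rw [← Real.exp_add]; ring_nf
    nlinarith [Real.add_one_le_exp (t / 2), sq_nonneg (t / 2 - 1), Real.exp_pos (t / 2)]

lemma maxGumbelPDF_nonneg {β : ℝ} (hβ : 0 < β) (μ x : ℝ) : 0 ≤ maxGumbelPDF μ β x := by
  unfold maxGumbelPDF; positivity

lemma minGumbelPDF_nonneg {β : ℝ} (hβ : 0 < β) (μ y : ℝ) : 0 ≤ minGumbelPDF μ β y := by
  unfold minGumbelPDF; positivity

lemma maxGumbelPDF_le {β : ℝ} (hβ : 0 < β) (μ x : ℝ) :
    maxGumbelPDF μ β x ≤ (1 / β) * Real.exp (-(β⁻¹ * |x - μ|)) := by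
  unfold maxGumbelPDF
  have h := exp_sub_exp_le (-(x - μ) / β)
  have habs : |(-(x - μ) / β)| = β⁻¹ * |x - μ| := by
    rw [abs_div, abs_neg, abs_of_pos hβ, div_eq_inv_mul]
  rw [habs] at h
  have h0 : (0:ℝ) ≤ 1 / β := by positivity
  exact mul_le_mul_of_nonneg_left h h0

lemma minGumbelPDF_le {β : ℝ} (hβ : 0 < β) (μ y : ℝ) :
    minGumbelPDF μ β y ≤ (1 / β) * Real.exp (-(β⁻¹ * |y - μ|)) := by
  unfold minGumbelPDF
  have h := exp_sub_exp_le ((y - μ) / β)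
  have habs : |((y - μ) / β)| = β⁻¹ * |y - μ| := by
    rw [abs_div, abs_of_pos hβ, div_eq_inv_mul]
  rw [habs] at h
  have h0 : (0:ℝ) ≤ 1 / β := by positivity
  exact mul_le_mul_of_nonneg_left h h0

lemma integrable_comp_abs' {f : ℝ → ℝ} (hf : IntegrableOn (fun x => f |x|) (Ioi 0)) :
    Integrable (fun x => f |x|) := by
  have int_Iic : IntegrableOn (fun x ↦ f |x|) (Iic 0) := by
    rw [← Measure.map_neg_eq_self (volume : Measure ℝ)]
    have m : MeasurableEmbedding fun x : ℝ => -x := (Homeomorph.neg ℝ).measurableEmbedding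
    rw [m.integrableOn_map_iff]
    simp_rw [Function.comp_def, abs_neg, neg_preimage, neg_Iic, neg_zero]
    exact (integrableOn_Ici_iff_integrableOn_Ioi).mpr hf
  have h := int_Iic.union hf
  rwa [Iic_union_Ioi, integrableOn_univ] at h

lemma integrable_base {b c : ℝ} (hb : 0 < b) (hc : 0 ≤ c) :
    Integrable (fun x : ℝ => (c + |x|) * Real.exp (-(b * |x|))) := by
  have heq : (fun x : ℝ => (c + |x|) * Real.exp (-(b * |x|)))
      = fun x : ℝ => (fun t => (c + t) * Real.exp (-(b * t))) |x| := rfl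
  rw [heq]
  apply integrable_comp_abs' (f := fun t => (c + t) * Real.exp (-(b * t)))
  have hg : IntegrableOn (fun x : ℝ => (c + 2 / b) * Real.exp (-(b / 2) * x)) (Ioi 0) :=
    (exp_neg_integrableOn_Ioi 0 (by positivity)).const_mul _
  apply Integrable.mono' hg
  · apply Continuous.aestronglyMeasurable
    fun_prop
  · filter_upwards [ae_restrict_mem measurableSet_Ioi] with x hx
    have hx0 : (0:ℝ) < x := hx
    rw [abs_of_pos hx0, Real.norm_eq_abs, abs_of_nonneg (by positivity)]
    have hE : Real.exp (-(b * x)) = Real.exp (-(b / 2) * x) * Real.exp (-(b / 2) * x) := by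
      rw [← Real.exp_add]; ring_nf
    have hEp := Real.exp_pos (-(b / 2) * x)
    have h1 : Real.exp (-(b / 2) * x) ≤ 1 := by
      rw [← Real.exp_zero]
      exact Real.exp_le_exp.2 (by nlinarith)
    have h2 : (b / 2) * x * Real.exp (-(b / 2) * x) ≤ 1 := by
      have ha := Real.add_one_le_exp ((b / 2) * x)
      have hmul : Real.exp ((b / 2) * x) * Real.exp (-(b / 2) * x) = 1 := by
        rw [← Real.exp_add]; ring_nf; exact Real.exp_zero
      nlinarith
    have h4 : x * Real.exp (-(b / 2) * x) ≤ 2 / b := by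
      rw [le_div_iff₀ hb]
      nlinarith
    rw [hE]
    nlinarith [mul_le_mul_of_nonneg_right h4 hEp.le,
      mul_le_mul_of_nonneg_left h1 (mul_nonneg hc hEp.le)]

lemma integrable_shifted {b : ℝ} (μ : ℝ) (hb : 0 < b) :
    Integrable (fun x : ℝ => (1 + |x|) * Real.exp (-(b * |x - μ|))) := by
  have h0 : Integrable (fun x : ℝ => ((1 + |μ|) + |x - μ|) * Real.exp (-(b * |x - μ|))) := by
    simpa using (integrable_base hb (c := 1 + |μ|) (by positivity)).comp_sub_right μ
  apply h0.mono'
  · apply Continuous.aestronglyMeasurable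
    fun_prop
  · filter_upwards with x
    rw [Real.norm_eq_abs, abs_of_nonneg (by positivity)]
    have h1 : 1 + |x| ≤ (1 + |μ|) + |x - μ| := by
      have := abs_sub_abs_le_abs_sub x μ
      linarith
    exact mul_le_mul_of_nonneg_right h1 (Real.exp_pos _).le

lemma integrable_dom {β : ℝ} (μ : ℝ) (hβ : 0 < β) :
    Integrable (fun x : ℝ => (1 / β) * ((1 + |x|) * Real.exp (-(β⁻¹ * |x - μ|)))) :=
  (integrable_shifted μ (by positivity)).const_mul _

@[fun_prop]
lemma continuous_maxGumbelPDF {β : ℝ} (μ : ℝ) : Continuous (maxGumbelPDF μ β) := by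
  unfold maxGumbelPDF; fun_prop

@[fun_prop]
lemma continuous_minGumbelPDF {β : ℝ} (μ : ℝ) : Continuous (minGumbelPDF μ β) := by
  unfold minGumbelPDF; fun_prop

lemma integrable_maxGumbelPDF {β : ℝ} (μ : ℝ) (hβ : 0 < β) :
    Integrable (maxGumbelPDF μ β) := by
  apply (integrable_dom μ hβ).mono' (continuous_maxGumbelPDF μ).aestronglyMeasurable
  filter_upwards with x
  rw [Real.norm_eq_abs, abs_of_nonneg (maxGumbelPDF_nonneg hβ μ x)]
  have h1 := maxGumbelPDF_le hβ μ x
  have h2 : (1 / β) * Real.exp (-(β⁻¹ * |x - μ|))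
      ≤ (1 / β) * ((1 + |x|) * Real.exp (-(β⁻¹ * |x - μ|))) := by
    have := Real.exp_pos (-(β⁻¹ * |x - μ|))
    have h3 : (0:ℝ) ≤ 1 / β := by positivity
    nlinarith [abs_nonneg x, mul_nonneg (abs_nonneg x) this.le]
  linarith

lemma integrable_minGumbelPDF {β : ℝ} (μ : ℝ) (hβ : 0 < β) :
    Integrable (minGumbelPDF μ β) := by
  apply (integrable_dom μ hβ).mono' (continuous_minGumbelPDF μ).aestronglyMeasurable
  filter_upwards with x
  rw [Real.norm_eq_abs, abs_of_nonneg (minGumbelPDF_nonneg hβ μ x)]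
  have h1 := minGumbelPDF_le hβ μ x
  have h2 : (1 / β) * Real.exp (-(β⁻¹ * |x - μ|))
      ≤ (1 / β) * ((1 + |x|) * Real.exp (-(β⁻¹ * |x - μ|))) := by
    have := Real.exp_pos (-(β⁻¹ * |x - μ|))
    have h3 : (0:ℝ) ≤ 1 / β := by positivity
    nlinarith [abs_nonneg x, mul_nonneg (abs_nonneg x) this.le]
  linarith

lemma integrable_abs_maxGumbelPDF {β : ℝ} (μ : ℝ) (hβ : 0 < β) :
    Integrable (fun x => |x| * maxGumbelPDF μ β x) := by
  apply (integrable_dom μ hβ).mono'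
  · exact (continuous_abs.mul (continuous_maxGumbelPDF μ)).aestronglyMeasurable
  · filter_upwards with x
    rw [Real.norm_eq_abs,
      abs_of_nonneg (mul_nonneg (abs_nonneg x) (maxGumbelPDF_nonneg hβ μ x))]
    have h1 := maxGumbelPDF_le hβ μ x
    have h2 : |x| * maxGumbelPDF μ β x ≤ |x| * ((1 / β) * Real.exp (-(β⁻¹ * |x - μ|))) :=
      mul_le_mul_of_nonneg_left h1 (abs_nonneg x)
    have h3 : (0:ℝ) ≤ 1 / β := by positivity
    nlinarith [Real.exp_pos (-(β⁻¹ * |x - μ|)), mul_nonneg h3 (Real.exp_pos (-(β⁻¹ * |x - μ|))).le]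

lemma integrable_abs_minGumbelPDF {β : ℝ} (μ : ℝ) (hβ : 0 < β) :
    Integrable (fun y => |y| * minGumbelPDF μ β y) := by
  apply (integrable_dom μ hβ).mono'
  · exact (continuous_abs.mul (continuous_minGumbelPDF μ)).aestronglyMeasurable
  · filter_upwards with x
    rw [Real.norm_eq_abs,
      abs_of_nonneg (mul_nonneg (abs_nonneg x) (minGumbelPDF_nonneg hβ μ x))]
    have h1 := minGumbelPDF_le hβ μ x
    have h2 : |x| * minGumbelPDF μ β x ≤ |x| * ((1 / β) * Real.exp (-(β⁻¹ * |x - μ|))) :=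
      mul_le_mul_of_nonneg_left h1 (abs_nonneg x)
    have h3 : (0:ℝ) ≤ 1 / β := by positivity
    nlinarith [Real.exp_pos (-(β⁻¹ * |x - μ|)), mul_nonneg h3 (Real.exp_pos (-(β⁻¹ * |x - μ|))).le]

lemma hasDerivAt_maxCDF {β : ℝ} (μ : ℝ) (hβ : 0 < β) (x : ℝ) :
    HasDerivAt (fun z => Real.exp (-Real.exp (-(z - μ) / β))) (maxGumbelPDF μ β x) x := by
  have h0 : HasDerivAt (fun z : ℝ => -(z - μ) / β) (-1 / β) x :=
    ((hasDerivAt_id x).sub_const μ).neg.div_const β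
  have h3 := h0.exp.neg.exp
  refine h3.congr_deriv ?_
  symm
  simp only [Pi.neg_apply]
  unfold maxGumbelPDF
  rw [sub_eq_add_neg, Real.exp_add]
  field_simp

lemma hasDerivAt_minSurv {β : ℝ} (μ : ℝ) (hβ : 0 < β) (y : ℝ) :
    HasDerivAt (fun z => -Real.exp (-Real.exp ((z - μ) / β))) (minGumbelPDF μ β y) y := by
  have h0 : HasDerivAt (fun z : ℝ => (z - μ) / β) (1 / β) y :=
    ((hasDerivAt_id y).sub_const μ).div_const β
  have h3 := h0.exp.neg.exp.neg
  refine h3.congr_deriv ?_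
  symm
  simp only [Pi.neg_apply]
  unfold minGumbelPDF
  rw [sub_eq_add_neg, Real.exp_add]
  field_simp

lemma tendsto_maxCDF_atBot {β : ℝ} (μ : ℝ) (hβ : 0 < β) :
    Tendsto (fun z => Real.exp (-Real.exp (-(z - μ) / β))) atBot (nhds 0) := by
  have ha : Tendsto (fun z : ℝ => -(z - μ)) atBot atTop := by
    have h := tendsto_atTop_add_const_left atBot μ
      (tendsto_neg_atBot_atTop : Tendsto (fun z : ℝ => -z) atBot atTop)
    exact h.congr (fun z => by ring)
  have h1 : Tendsto (fun z : ℝ => -(z - μ) / β) atBot atTop := ha.atTop_div_const hβ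
  have h2 : Tendsto (fun z : ℝ => -Real.exp (-(z - μ) / β)) atBot atBot :=
    tendsto_neg_atTop_atBot.comp (Real.tendsto_exp_atTop.comp h1)
  exact Real.tendsto_exp_atBot.comp h2

lemma tendsto_minSurv_atTop {β : ℝ} (μ : ℝ) (hβ : 0 < β) :
    Tendsto (fun z => -Real.exp (-Real.exp ((z - μ) / β))) atTop (nhds 0) := by
  have ha : Tendsto (fun z : ℝ => z - μ) atTop atTop := by
    have h := tendsto_atTop_add_const_right atTop (-μ) (tendsto_id : Tendsto (fun z : ℝ => z) atTop atTop)
    exact h.congr (fun z => by simp only [id_eq]; ring)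
  have h1 : Tendsto (fun z : ℝ => (z - μ) / β) atTop atTop := ha.atTop_div_const hβ
  have h2 : Tendsto (fun z : ℝ => -Real.exp ((z - μ) / β)) atTop atBot :=
    tendsto_neg_atTop_atBot.comp (Real.tendsto_exp_atTop.comp h1)
  have h3 := Real.tendsto_exp_atBot.comp h2
  simpa using h3.neg

lemma integral_Iio_maxGumbelPDF {β : ℝ} (μ : ℝ) (hβ : 0 < β) (y : ℝ) :
    ∫ x in Iio y, maxGumbelPDF μ β x = maxGumbelCDF μ β y := by
  rw [← integral_Iic_eq_integral_Iio]
  rw [integral_Iic_of_hasDerivAt_of_tendsto' (fun x _ => hasDerivAt_maxCDF μ hβ x)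
    (integrable_maxGumbelPDF μ hβ).integrableOn (tendsto_maxCDF_atBot μ hβ)]
  simp [maxGumbelCDF]

lemma integral_Ioi_minGumbelPDF {β : ℝ} (μ : ℝ) (hβ : 0 < β) (x : ℝ) :
    ∫ y in Ioi x, minGumbelPDF μ β y = Real.exp (-Real.exp ((x - μ) / β)) := by
  rw [integral_Ioi_of_hasDerivAt_of_tendsto' (fun y _ => hasDerivAt_minSurv μ hβ y)
    (integrable_minGumbelPDF μ hβ).integrableOn (tendsto_minSurv_atTop μ hβ)]
  simp

/-- For independent X ~ MaxGumbel(μx, β) and Y ~ MinGumbel(μy, β),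
E[max(Y - X, 0)] = E[Y·F_max(Y; μx)] - E[X·F_max(-X; -μy)]. -/
theorem expected_interval_length_as_difference (β μx μy : ℝ) (hβ : 0 < β) :
    (∫ p : ℝ × ℝ, max (p.2 - p.1) 0 * maxGumbelPDF μx β p.1 * minGumbelPDF μy β p.2) =
      (∫ y : ℝ, y * maxGumbelCDF μx β y * minGumbelPDF μy β y) -
      (∫ x : ℝ, x * maxGumbelCDF (-μy) β (-x) * maxGumbelPDF μx β x) := by
  have hS : MeasurableSet {p : ℝ × ℝ | p.1 < p.2} := measurableSet_lt measurable_fst measurable_snd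
  set F1 : ℝ × ℝ → ℝ := fun p =>
    Set.indicator {p : ℝ × ℝ | p.1 < p.2}
      (fun p => p.2 * maxGumbelPDF μx β p.1 * minGumbelPDF μy β p.2) p with hF1def
  set F2 : ℝ × ℝ → ℝ := fun p =>
    Set.indicator {p : ℝ × ℝ | p.1 < p.2}
      (fun p => p.1 * maxGumbelPDF μx β p.1 * minGumbelPDF μy β p.2) p with hF2def
  have hc1 : Continuous (fun p : ℝ × ℝ => p.2 * maxGumbelPDF μx β p.1 * minGumbelPDF μy β p.2) := by
    fun_prop
  have hc2 : Continuous (fun p : ℝ × ℝ => p.1 * maxGumbelPDF μx β p.1 * minGumbelPDF μy β p.2) := by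
    fun_prop
  have hmeas1 : AEStronglyMeasurable F1 volume := hc1.aestronglyMeasurable.indicator hS
  have hmeas2 : AEStronglyMeasurable F2 volume := hc2.aestronglyMeasurable.indicator hS
  have hdom1 : Integrable (fun p : ℝ × ℝ =>
      maxGumbelPDF μx β p.1 * (|p.2| * minGumbelPDF μy β p.2)) := by
    have h := (integrable_maxGumbelPDF μx hβ).mul_prod (integrable_abs_minGumbelPDF μy hβ)
    rwa [← Measure.volume_eq_prod] at h
  have hdom2 : Integrable (fun p : ℝ × ℝ =>
      (|p.1| * maxGumbelPDF μx β p.1) * minGumbelPDF μy β p.2) := by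
    have h := (integrable_abs_maxGumbelPDF μx hβ).mul_prod (integrable_minGumbelPDF μy hβ)
    rwa [← Measure.volume_eq_prod] at h
  have hint1 : Integrable F1 := by
    apply hdom1.mono' hmeas1
    filter_upwards with p
    refine le_trans (norm_indicator_le_norm_self _ _) ?_
    rw [Real.norm_eq_abs, abs_mul, abs_mul,
      abs_of_nonneg (maxGumbelPDF_nonneg hβ μx p.1),
      abs_of_nonneg (minGumbelPDF_nonneg hβ μy p.2)]
    apply le_of_eq
    ring
  have hint2 : Integrable F2 := by
    apply hdom2.mono' hmeas2
    filter_upwards with p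
    refine le_trans (norm_indicator_le_norm_self _ _) ?_
    rw [Real.norm_eq_abs, abs_mul, abs_mul,
      abs_of_nonneg (maxGumbelPDF_nonneg hβ μx p.1),
      abs_of_nonneg (minGumbelPDF_nonneg hβ μy p.2)]
  have hsplit : (fun p : ℝ × ℝ =>
      max (p.2 - p.1) 0 * maxGumbelPDF μx β p.1 * minGumbelPDF μy β p.2)
      = fun p => F1 p - F2 p := by
    funext p
    by_cases h : p.1 < p.2
    · have hm : p ∈ {p : ℝ × ℝ | p.1 < p.2} := h
      rw [hF1def, hF2def]
      simp only [Set.indicator_of_mem hm]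
      rw [max_eq_left (by linarith)]
      ring
    · have hm : p ∉ {p : ℝ × ℝ | p.1 < p.2} := h
      rw [hF1def, hF2def]
      simp only [Set.indicator_of_notMem hm]
      rw [max_eq_right (by simp only [Set.mem_setOf_eq] at hm; linarith [not_lt.1 h])]
      ring
  rw [hsplit, integral_sub hint1 hint2]
  have hint1' : Integrable F1 (volume.prod volume) := by rwa [← Measure.volume_eq_prod]
  have hint2' : Integrable F2 (volume.prod volume) := by rwa [← Measure.volume_eq_prod]
  congr 1
  · -- first term
    rw [Measure.volume_eq_prod, integral_prod _ hint1', integral_integral_swap hint1']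
    apply integral_congr_ae
    filter_upwards with y
    have hpt : ∀ x : ℝ, F1 (x, y) =
        (Iio y).indicator (fun x => (y * minGumbelPDF μy β y) * maxGumbelPDF μx β x) x := by
      intro x
      by_cases h : x < y
      · simp only [hF1def]
        rw [Set.indicator_of_mem (by exact h : (x, y) ∈ {p : ℝ × ℝ | p.1 < p.2}),
          Set.indicator_of_mem (by exact h : x ∈ Iio y)]
        ring
      · simp only [hF1def]
        rw [Set.indicator_of_notMem (by exact h : (x, y) ∉ {p : ℝ × ℝ | p.1 < p.2}),
          Set.indicator_of_notMem (by exact h : x ∉ Iio y)]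
    simp only [hpt]
    rw [integral_indicator measurableSet_Iio, integral_const_mul,
      integral_Iio_maxGumbelPDF μx hβ y]
    ring
  · -- second term
    rw [Measure.volume_eq_prod, integral_prod _ hint2']
    apply integral_congr_ae
    filter_upwards with x
    have hpt : ∀ y : ℝ, F2 (x, y) =
        (Ioi x).indicator (fun y => (x * maxGumbelPDF μx β x) * minGumbelPDF μy β y) y := by
      intro y
      by_cases h : x < y
      · simp only [hF2def]
        rw [Set.indicator_of_mem (by exact h : (x, y) ∈ {p : ℝ × ℝ | p.1 < p.2}),
          Set.indicator_of_mem (by exact h : y ∈ Ioi x)]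
      · simp only [hF2def]
        rw [Set.indicator_of_notMem (by exact h : (x, y) ∉ {p : ℝ × ℝ | p.1 < p.2}),
          Set.indicator_of_notMem (by exact h : y ∉ Ioi x)]
    simp only [hpt]
    rw [integral_indicator measurableSet_Ioi, integral_const_mul,
      integral_Ioi_minGumbelPDF μy hβ x]
    have hcdf : Real.exp (-Real.exp ((x - μy) / β)) = maxGumbelCDF (-μy) β (-x) := by
      unfold maxGumbelCDF
      ring_nf
    rw [hcdf]
    ring
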